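/- arXiv:1209.5075 — 2 statements merged into one kernel-verified Lean document; each statement's English description precedes it below -/
import Mathlib

section
/- Let m, f ≥ 1, let A, A' be m×m positive definite real matrices and B, B' be f×f positive definite real matrices. If the Kronecker products satisfy A ⊗ B = A' ⊗ B', then there exists η > 0 such that A' = ηA and B' = (1/η)B; consequently the correlation matrices agree: ρ(A') = ρ(A) and ρ(B') = ρ(B). -/
open Matrix
open scoped Kronecker

noncomputable section

/-- The correlation matrix `ρ(A) = (a_{ij}/√(a_{ii}a_{jj}))`. -/
def corr {n : Type*} [Fintype n] (A : Matrix n n ℝ) : Matrix n n ℝ :=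
  Matrix.of fun i j => A i j / Real.sqrt (A i i * A j j)

lemma corr_smul {n : Type*} [Fintype n] (A : Matrix n n ℝ) {c : ℝ} (hc : 0 < c) :
    corr (c • A) = corr A := by
  ext i j
  simp only [corr, Matrix.of_apply, Matrix.smul_apply, smul_eq_mul]
  rw [show c * A i i * (c * A j j) = c ^ 2 * (A i i * A j j) by ring,
    Real.sqrt_mul (by positivity), Real.sqrt_sq hc.le]
  rcases eq_or_ne (Real.sqrt (A i i * A j j)) 0 with h0 | h0
  · simp [h0]
  · field_simp

lemma posdef_diag_pos {n : Type*} [Fintype n] [DecidableEq n] {A : Matrix n n ℝ}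
    (hA : A.PosDef) (i : n) : 0 < A i i := by
  have hne : (Pi.single i 1 : n → ℝ) ≠ 0 := by
    intro hc
    have := congrFun hc i
    simp at this
  have := hA.dotProduct_mulVec_pos hne
  simpa [dotProduct, Matrix.mulVec, Pi.single_apply] using this

/-- Identifiability: if `A ⊗ B = A' ⊗ B'` for positive definite matrices, then
`A' = ηA` and `B' = (1/η)B` for some `η > 0`; in particular the correlation
matrices agree. -/
theorem kronecker_identifiability {m f : ℕ} (hm : 1 ≤ m) (hf : 1 ≤ f)
    (A A' : Matrix (Fin m) (Fin m) ℝ) (B B' : Matrix (Fin f) (Fin f) ℝ)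
    (hA : A.PosDef) (hA' : A'.PosDef) (hB : B.PosDef) (hB' : B'.PosDef)
    (h : A ⊗ₖ B = A' ⊗ₖ B') :
    ∃ η : ℝ, 0 < η ∧ A' = η • A ∧ B' = (1 / η) • B ∧
      corr A' = corr A ∧ corr B' = corr B := by
  have i0 : Fin m := ⟨0, hm⟩
  have k0 : Fin f := ⟨0, hf⟩
  have key : ∀ (i j : Fin m) (k l : Fin f), A i j * B k l = A' i j * B' k l := by
    intro i j k l
    have := congrFun (congrFun h (i, k)) (j, l)
    simpa [Matrix.kroneckerMap_apply] using this
  have ha : 0 < A i0 i0 := posdef_diag_pos hA i0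
  have ha' : 0 < A' i0 i0 := posdef_diag_pos hA' i0
  have hb : 0 < B k0 k0 := posdef_diag_pos hB k0
  have hb' : 0 < B' k0 k0 := posdef_diag_pos hB' k0
  set η : ℝ := A' i0 i0 / A i0 i0 with hη
  have hηpos : 0 < η := div_pos ha' ha
  have hbb : B' k0 k0 = (1 / η) * B k0 k0 := by
    have := key i0 i0 k0 k0
    field_simp [hη]
    rw [hη, mul_div_assoc', div_eq_iff ha.ne']
    nlinarith [this]
  have hAeq : A' = η • A := by
    ext i j
    have h1 := key i j k0 k0
    have : A' i j * B' k0 k0 = A i j * B k0 k0 := h1.symm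
    rw [hbb] at this
    have hη0 : η ≠ 0 := hηpos.ne'
    simp only [Matrix.smul_apply, smul_eq_mul]
    field_simp at this
    nlinarith [this]
  have hBeq : B' = (1 / η) • B := by
    ext k l
    have h1 := key i0 i0 k l
    simp only [Matrix.smul_apply, smul_eq_mul]
    have hη0 : η ≠ 0 := hηpos.ne'
    have haa : A' i0 i0 = η * A i0 i0 := by
      field_simp [hη]
      rw [hη, div_mul_cancel₀ _ ha.ne']
    rw [haa] at h1
    field_simp
    nlinarith [h1]
  refine ⟨η, hηpos, hAeq, hBeq, ?_, ?_⟩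
  · rw [hAeq, corr_smul _ hηpos]
  · rw [hBeq, corr_smul _ (by positivity : (0:ℝ) < 1 / η)]

end
end

section
/- Let Γ̂ be an m×m symmetric positive semidefinite real matrix with Γ̂_{ii} = 1 for all i, and let λ > 0. Then the function Θ ↦ tr(Γ̂Θ) − log det(Θ) + λ|Θ|_{1,off} attains its minimum over the set of m×m positive definite matrices, and the minimizer Θ̂ is unique; moreover Â_ρ := Θ̂⁻¹ is the unique minimizer over positive definite matrices A_ρ of A_ρ ↦ tr(Γ̂A_ρ⁻¹) + log det(A_ρ) + λ|A_ρ⁻¹|_{1,off}. -/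
open Matrix

noncomputable section

/-- Off-diagonal vectorized ℓ₁ norm `|M|_{1,off}`. -/
def offDiagL1 {n : Type*} [Fintype n] [DecidableEq n] (M : Matrix n n ℝ) : ℝ :=
  ∑ i, ∑ j, if i = j then 0 else |M i j|

/-- The graphical Lasso objective in the precision matrix `Θ`:
`tr(Γ̂Θ) − log det Θ + λ|Θ|_{1,off}`. -/
def glassoObj {n : Type*} [Fintype n] [DecidableEq n]
    (Γ : Matrix n n ℝ) (lam : ℝ) (Θ : Matrix n n ℝ) : ℝ :=
  (Γ * Θ).trace - Real.log Θ.det + lam * offDiagL1 Θ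

/-- The corresponding objective in the covariance parameter `A_ρ`:
`tr(Γ̂A_ρ⁻¹) + log det A_ρ + λ|A_ρ⁻¹|_{1,off}`. -/
def glassoObjCov {n : Type*} [Fintype n] [DecidableEq n]
    (Γ : Matrix n n ℝ) (lam : ℝ) (Arho : Matrix n n ℝ) : ℝ :=
  (Γ * Arho⁻¹).trace + Real.log Arho.det + lam * offDiagL1 Arho⁻¹

section Aux

open Finset

open scoped MatrixOrder

set_option linter.unusedSectionVars false

variable {n : Type*} [Fintype n] [DecidableEq n]

lemma psd_diag_nonneg {M : Matrix n n ℝ} (hM : M.PosSemidef) (i : n) : 0 ≤ M i i := by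
  have := hM.dotProduct_mulVec_nonneg (Pi.single i 1)
  simpa [dotProduct, mulVec, Pi.single_apply] using this

lemma herm_symm {M : Matrix n n ℝ} (hM : M.IsHermitian) (i j : n) : M j i = M i j := by
  have := congrFun (congrFun hM j) i
  simpa [conjTranspose_apply] using this.symm

lemma psd_offdiag_bound {M : Matrix n n ℝ} (hM : M.PosSemidef) (i j : n) :
    |M i j| ≤ (M i i + M j j) / 2 := by
  rcases eq_or_ne i j with rfl | hij
  · have h := psd_diag_nonneg hM i
    rw [abs_of_nonneg h]; linarith
  · have hsym : M j i = M i j := herm_symm hM.1 i j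
    have h1 := hM.dotProduct_mulVec_nonneg (Pi.single i 1 + Pi.single j 1)
    have h2 := hM.dotProduct_mulVec_nonneg (Pi.single i 1 - Pi.single j 1)
    have q1 : dotProduct (star (Pi.single i 1 + Pi.single j 1)) (M *ᵥ (Pi.single i 1 + Pi.single j 1))
        = M i i + M i j + (M j i + M j j) := by
      simp [dotProduct, mulVec, Pi.single_apply, mul_add, add_mul, ite_mul, mul_ite,
        Finset.sum_add_distrib, hij, hij.symm]
      linarith [hsym]
    have q2 : dotProduct (star (Pi.single i 1 - Pi.single j 1)) (M *ᵥ (Pi.single i 1 - Pi.single j 1))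
        = M i i - M i j - (M j i - M j j) := by
      simp [dotProduct, mulVec, Pi.single_apply, mul_sub, sub_mul, ite_mul, mul_ite,
        Finset.sum_sub_distrib, hij, hij.symm]
      linarith [hsym]
    rw [q1] at h1; rw [q2] at h2
    rw [abs_le]; constructor <;> linarith

lemma offDiagL1_nonneg (M : Matrix n n ℝ) : 0 ≤ offDiagL1 M := by
  refine Finset.sum_nonneg fun i _ => Finset.sum_nonneg fun j _ => ?_
  split <;> positivity

lemma psd_trace_nonneg {M : Matrix n n ℝ} (hM : M.PosSemidef) : 0 ≤ M.trace :=
  Finset.sum_nonneg fun i _ => psd_diag_nonneg hM i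

lemma psd_diag_le_trace {M : Matrix n n ℝ} (hM : M.PosSemidef) (i : n) : M i i ≤ M.trace :=
  Finset.single_le_sum (f := fun k => M k k) (fun k _ => psd_diag_nonneg hM k) (mem_univ i)

lemma trace_mul_psd_nonneg {Γ Θ : Matrix n n ℝ} (hΓ : Γ.PosSemidef) (hΘ : Θ.PosSemidef) :
    0 ≤ (Γ * Θ).trace := by
  obtain ⟨B, rfl⟩ := CStarAlgebra.nonneg_iff_eq_star_mul_self.mp hΓ.nonneg
  rw [star_eq_conjTranspose]
  rw [← Matrix.trace_mul_cycle B Θ Bᴴ]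
  exact psd_trace_nonneg (hΘ.mul_mul_conjTranspose_same B)

lemma trace_mul_expand (Γ Θ : Matrix n n ℝ) : (Γ * Θ).trace = ∑ i, ∑ j, Γ i j * Θ j i := by
  simp [Matrix.trace, Matrix.diag, Matrix.mul_apply]

lemma trace_mul_ge {Γ Θ : Matrix n n ℝ} (hΓ : Γ.PosSemidef) (hdiag : ∀ i, Γ i i = 1)
    (hΘ : Θ.PosSemidef) : Θ.trace - offDiagL1 Θ ≤ (Γ * Θ).trace := by
  rw [trace_mul_expand]
  have habs : ∀ i j, |Γ i j| ≤ 1 := by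
    intro i j
    calc |Γ i j| ≤ (Γ i i + Γ j j) / 2 := psd_offdiag_bound hΓ i j
    _ = 1 := by rw [hdiag, hdiag]; norm_num
  have key : ∀ i j, (if i = j then Θ i i else -|Θ i j|) ≤ Γ i j * Θ j i := by
    intro i j
    split
    · next h => subst h; rw [hdiag]; ring_nf; exact le_rfl
    · next h =>
      have h1 : |Γ i j * Θ j i| ≤ |Θ i j| := by
        rw [abs_mul, herm_symm hΘ.1 i j]
        calc |Γ i j| * |Θ i j| ≤ 1 * |Θ i j| :=
          mul_le_mul_of_nonneg_right (habs i j) (abs_nonneg _)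
        _ = |Θ i j| := one_mul _
      linarith [neg_abs_le (Γ i j * Θ j i)]
  calc Θ.trace - offDiagL1 Θ = ∑ i, ∑ j, (if i = j then Θ i i else -|Θ i j|) := by
        rw [Matrix.trace, offDiagL1, ← Finset.sum_sub_distrib]
        refine Finset.sum_congr rfl fun i _ => ?_
        rw [show Θ.diag i = ∑ j, if i = j then Θ i i else 0 by simp [Matrix.diag]]
        rw [← Finset.sum_sub_distrib]
        refine Finset.sum_congr rfl fun j _ => ?_
        split <;> ring
    _ ≤ _ := Finset.sum_le_sum fun i _ => Finset.sum_le_sum fun j _ => key i j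

lemma coercive_trace {Γ Θ : Matrix n n ℝ} (hΓ : Γ.PosSemidef) (hdiag : ∀ i, Γ i i = 1)
    (hΘ : Θ.PosSemidef) {lam : ℝ} (hlam : 0 < lam) :
    min lam 1 * Θ.trace ≤ (Γ * Θ).trace + lam * offDiagL1 Θ := by
  have h0 := trace_mul_psd_nonneg hΓ hΘ
  have h1 := trace_mul_ge hΓ hdiag hΘ
  have h2 := offDiagL1_nonneg Θ
  have h3 := psd_trace_nonneg hΘ
  rcases le_total lam 1 with h | h
  · rw [min_eq_left h]
    nlinarith
  · rw [min_eq_right h]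
    nlinarith

lemma herm_trace_eq_sum {A : Matrix n n ℝ} (hA : A.IsHermitian) :
    A.trace = ∑ i, hA.eigenvalues i := by
  conv_lhs => rw [hA.spectral_theorem]
  rw [Unitary.conjStarAlgAut_apply]
  rw [Matrix.trace_mul_cycle]
  rw [show (star (hA.eigenvectorUnitary : Matrix n n ℝ)) * (hA.eigenvectorUnitary : Matrix n n ℝ)
      = 1 from Unitary.coe_star_mul_self _]
  simp [Matrix.trace_diagonal]

lemma pd_log_det {A : Matrix n n ℝ} (hA : A.PosDef) :
    Real.log A.det = ∑ i, Real.log (hA.1.eigenvalues i) := by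
  rw [show A.det = ∏ i, hA.1.eigenvalues i by simpa using hA.1.det_eq_prod_eigenvalues]
  exact Real.log_prod fun i _ => (hA.eigenvalues_pos i).ne'

lemma scalar_coercive {c x : ℝ} (hc : 0 < c) (hx : 0 < x) :
    c / 2 * x + (1 + Real.log (c / 2)) ≤ c * x - Real.log x := by
  have h := Real.log_le_sub_one_of_pos (show 0 < c / 2 * x by positivity)
  rw [Real.log_mul (by positivity) hx.ne'] at h
  linarith

lemma psd_posDef_of_det_ne_zero {A : Matrix n n ℝ} (hA : A.PosSemidef) (hd : A.det ≠ 0) :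
    A.PosDef := by
  refine posDef_iff_dotProduct_mulVec.mpr ⟨hA.1, fun x hx => ?_⟩
  rcases lt_or_eq_of_le (hA.dotProduct_mulVec_nonneg x) with h | h
  · exact h
  · exfalso
    have h0 : A *ᵥ x = 0 := (hA.dotProduct_mulVec_zero_iff x).mp h.symm
    have hinj : Function.Injective (A.mulVec) :=
      Matrix.mulVec_injective_iff_isUnit.mpr ((Matrix.isUnit_iff_isUnit_det A).mpr hd.isUnit)
    exact hx (hinj (by simpa using h0))

lemma posDef_conj {N : Matrix n n ℝ} (hN : N.PosDef) {C : Matrix n n ℝ} (hC : IsUnit C.det) :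
    (Cᴴ * N * C).PosDef := by
  refine posDef_iff_dotProduct_mulVec.mpr ⟨isHermitian_conjTranspose_mul_mul C hN.1, fun x hx => ?_⟩
  have hCx : C *ᵥ x ≠ 0 := by
    intro h
    exact hx ((Matrix.mulVec_injective_iff_isUnit.mpr ((Matrix.isUnit_iff_isUnit_det C).mpr hC))
      (by simpa using h))
  simpa only [star_mulVec, dotProduct_mulVec, vecMul_vecMul] using hN.dotProduct_mulVec_pos hCx

lemma posDef_smul {A : Matrix n n ℝ} (hA : A.PosDef) {c : ℝ} (hc : 0 < c) : (c • A).PosDef := by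
  refine posDef_iff_dotProduct_mulVec.mpr ⟨by simpa [IsHermitian] using congrArg (c • ·) hA.1, fun x hx => ?_⟩
  rw [smul_mulVec, dotProduct_smul]
  exact mul_pos hc (hA.dotProduct_mulVec_pos hx)

lemma logdet_strict_midpoint {A B : Matrix n n ℝ} (hA : A.PosDef) (hB : B.PosDef)
    (hne : A ≠ B) :
    Real.log A.det + Real.log B.det < 2 * Real.log (((2:ℝ)⁻¹ • (A + B)).det) := by
  classical
  set S := CFC.sqrt A with hSdef
  have hS : S.PosSemidef := (CFC.sqrt_nonneg A).posSemidef
  have hSS : S * S = A := CFC.sqrt_mul_sqrt_self A hA.posSemidef.nonneg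
  have hSd : S.det ≠ 0 := by
    intro h
    have : A.det = 0 := by rw [← hSS, det_mul, h, mul_zero]
    exact hA.det_pos.ne' this
  have hSu : IsUnit S.det := hSd.isUnit
  have hSh : Sᴴ = S := hS.1
  have hSih : (S⁻¹)ᴴ = S⁻¹ := hS.1.inv
  have hSiu : IsUnit (S⁻¹).det := Matrix.isUnit_nonsing_inv_det S hSu
  set M := S⁻¹ * B * S⁻¹ with hMdef
  have hM : M.PosDef := by
    have := posDef_conj hB hSiu
    rwa [hSih] at this
  have hBM : B = S * M * S := by
    rw [hMdef]
    rw [show S * (S⁻¹ * B * S⁻¹) * S = (S * S⁻¹) * (B * (S⁻¹ * S)) by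
      simp only [Matrix.mul_assoc]]
    rw [mul_nonsing_inv _ hSu, nonsing_inv_mul _ hSu, one_mul, mul_one]
  have hMne : M ≠ 1 := by
    intro h
    apply hne
    rw [hBM, h, mul_one, hSS]
  have hdetB : B.det = A.det * M.det := by
    have h1 : B.det = S.det * M.det * S.det := by rw [hBM, det_mul, det_mul]
    have h2 : A.det = S.det * S.det := by rw [← hSS, det_mul]
    rw [h1, h2]; ring
  set U : Matrix n n ℝ := (hM.1.eigenvectorUnitary : Matrix n n ℝ) with hUdef
  set μ := hM.1.eigenvalues with hμdef
  have hUs : U * star U = 1 := Unitary.coe_mul_star_self _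
  have hUU : star U * U = 1 := Unitary.coe_star_mul_self _
  have hUu : IsUnit U := by
    refine (Matrix.isUnit_iff_isUnit_det U).mpr (IsUnit.of_mul_eq_one (star U).det ?_)
    rw [← det_mul, hUs, det_one]
  have hUinv : U⁻¹ = star U := inv_eq_right_inv hUs
  have hspec : M = U * diagonal μ * star U := by
    have := hM.1.spectral_theorem
    simpa using this
  have hmid : (2:ℝ)⁻¹ • (A + B) = S * ((2:ℝ)⁻¹ • (1 + M)) * S := by
    rw [Matrix.mul_smul, Matrix.smul_mul]
    congr 1
    rw [mul_add, add_mul, mul_one, hSS, ← hBM]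
  set P : ℝ := ∏ i, (1 + μ i) / 2 with hPdef
  have hNdet : ((2:ℝ)⁻¹ • (1 + M)).det = P := by
    have h1M : (2:ℝ)⁻¹ • (1 + M) = U * ((2:ℝ)⁻¹ • (1 + diagonal μ)) * U⁻¹ := by
      rw [hUinv, Matrix.mul_smul, Matrix.smul_mul]
      congr 1
      rw [mul_add, add_mul, mul_one, hUs, ← hspec]
    rw [h1M, Matrix.det_conj hUu]
    rw [show (1 : Matrix n n ℝ) + diagonal μ = diagonal (fun i => 1 + μ i) by
      rw [← diagonal_one, diagonal_add]]
    rw [show ((2:ℝ)⁻¹ • diagonal (fun i => 1 + μ i) : Matrix n n ℝ)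
        = diagonal (fun i => (1 + μ i)/2) by
      ext i j
      by_cases h : i = j <;> simp [Matrix.diagonal_apply, h] <;> ring]
    rw [det_diagonal]
  have hdetM : M.det = ∏ i, μ i := by simpa using hM.1.det_eq_prod_eigenvalues
  have hμpos : ∀ i, 0 < μ i := fun i => hM.eigenvalues_pos i
  have hex : ∃ i, μ i ≠ 1 := by
    by_contra h
    push_neg at h
    apply hMne
    rw [hspec, show diagonal μ = 1 by rw [show μ = fun _ => (1:ℝ) from funext h]; exact diagonal_one,
      mul_one, hUs]
  obtain ⟨i0, hi0⟩ := hex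
  have hprod : ∏ i, μ i < ∏ i, ((1 + μ i)/2)^2 := by
    refine Finset.prod_lt_prod (fun i _ => hμpos i)
      (fun i _ => by nlinarith [hμpos i, sq_nonneg (1 - μ i)]) ?_
    exact ⟨i0, mem_univ i0,
      by nlinarith [hμpos i0, (sq_pos_of_ne_zero (sub_ne_zero.mpr (Ne.symm hi0)))]⟩
  have hP2 : P^2 = ∏ i, ((1 + μ i)/2)^2 := by rw [hPdef, ← Finset.prod_pow]
  have hPpos : 0 < P := Finset.prod_pos fun i _ => by have := hμpos i; positivity
  have hmiddet : ((2:ℝ)⁻¹ • (A + B)).det = A.det * P := by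
    have h1 : ((2:ℝ)⁻¹ • (A + B)).det = S.det * P * S.det := by
      rw [hmid, det_mul, det_mul, hNdet]
    have h2 : A.det = S.det * S.det := by rw [← hSS, det_mul]
    rw [h1, h2]; ring
  have hApos := hA.det_pos
  have hBpos := hB.det_pos
  have hkey : A.det * B.det < (A.det * P)^2 := by
    rw [hdetB, hdetM]
    have : A.det * (A.det * ∏ i, μ i) < A.det * (A.det * ∏ i, ((1+μ i)/2)^2) :=
      mul_lt_mul_of_pos_left (mul_lt_mul_of_pos_left hprod hApos) hApos
    calc A.det * (A.det * ∏ i, μ i) < A.det * (A.det * ∏ i, ((1+μ i)/2)^2) := this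
      _ = (A.det * P)^2 := by rw [← hP2] at this ⊢; ring
  calc Real.log A.det + Real.log B.det = Real.log (A.det * B.det) :=
        (Real.log_mul hApos.ne' hBpos.ne').symm
    _ < Real.log ((A.det * P)^2) := Real.log_lt_log (mul_pos hApos hBpos) hkey
    _ = 2 * Real.log (A.det * P) := by
        rw [show ((A.det * P)^2) = (A.det*P)^(2:ℕ) by norm_num, Real.log_pow]; norm_num
    _ = 2 * Real.log (((2:ℝ)⁻¹ • (A + B)).det) := by rw [hmiddet]

lemma glasso_lower {Γ : Matrix n n ℝ} (hΓ : Γ.PosSemidef) (hdiag : ∀ i, Γ i i = 1)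
    {lam : ℝ} (hlam : 0 < lam) {Θ : Matrix n n ℝ} (hΘ : Θ.PosDef) :
    min lam 1 / 2 * Θ.trace + (Fintype.card n) * (1 + Real.log (min lam 1 / 2))
      ≤ glassoObj Γ lam Θ := by
  set c := min lam 1 with hcdef
  have hc : 0 < c := lt_min hlam one_pos
  have h1 : c * Θ.trace - Real.log Θ.det ≤ glassoObj Γ lam Θ := by
    have := coercive_trace hΓ hdiag hΘ.posSemidef hlam
    rw [glassoObj]
    linarith
  have h2 : c/2 * Θ.trace + (Fintype.card n) * (1 + Real.log (c/2))
      ≤ c * Θ.trace - Real.log Θ.det := by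
    rw [herm_trace_eq_sum hΘ.1, pd_log_det hΘ, Finset.mul_sum, Finset.mul_sum, ← Finset.sum_sub_distrib]
    rw [show ((Fintype.card n : ℝ)) * (1 + Real.log (c/2))
        = ∑ _i : n, (1 + Real.log (c/2)) by rw [Finset.sum_const, nsmul_eq_mul, Finset.card_univ]]
    rw [← Finset.sum_add_distrib]
    exact Finset.sum_le_sum fun i _ => scalar_coercive hc (hΘ.eigenvalues_pos i)
  linarith

lemma continuous_entry (i j : n) : Continuous fun Θ : Matrix n n ℝ => Θ i j :=
  (continuous_apply j).comp (continuous_apply i)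

lemma continuous_traceMul (Γ : Matrix n n ℝ) : Continuous fun Θ : Matrix n n ℝ => (Γ * Θ).trace := by
  have : (fun Θ : Matrix n n ℝ => (Γ * Θ).trace) = fun Θ => ∑ i, ∑ j, Γ i j * Θ j i := by
    funext Θ; exact trace_mul_expand Γ Θ
  rw [this]
  exact continuous_finset_sum _ fun i _ => continuous_finset_sum _ fun j _ =>
    continuous_const.mul (continuous_entry j i)

lemma continuous_offDiagL1 : Continuous fun Θ : Matrix n n ℝ => offDiagL1 Θ := by
  refine continuous_finset_sum _ fun i _ => continuous_finset_sum _ fun j _ => ?_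
  by_cases h : i = j
  · simp only [h, if_pos]; exact continuous_const
  · simp only [h, if_neg, if_false]
    exact continuous_abs.comp (continuous_entry i j)

lemma continuousOn_glasso (Γ : Matrix n n ℝ) (lam : ℝ) :
    ContinuousOn (glassoObj Γ lam) {Θ : Matrix n n ℝ | Θ.det ≠ 0} := by
  have hdet : Continuous fun Θ : Matrix n n ℝ => Θ.det := continuous_id.matrix_det
  have hlog : ContinuousOn (fun Θ : Matrix n n ℝ => Real.log Θ.det) {Θ | Θ.det ≠ 0} :=
    ContinuousOn.log hdet.continuousOn fun Θ hΘ => hΘ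
  exact (((continuous_traceMul Γ).continuousOn.sub hlog).add
    ((continuous_const.mul continuous_offDiagL1).continuousOn))

lemma isClosed_posSemidef : IsClosed {Θ : Matrix n n ℝ | Θ.PosSemidef} := by
  have h1 : IsClosed {Θ : Matrix n n ℝ | Θᴴ = Θ} :=
    isClosed_eq (continuous_id.matrix_conjTranspose) continuous_id
  have h2 : IsClosed {Θ : Matrix n n ℝ | ∀ x : n → ℝ, 0 ≤ dotProduct (star x) (Θ *ᵥ x)} := by
    rw [show {Θ : Matrix n n ℝ | ∀ x : n → ℝ, 0 ≤ dotProduct (star x) (Θ *ᵥ x)}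
        = ⋂ x : n → ℝ, {Θ | 0 ≤ dotProduct (star x) (Θ *ᵥ x)} by ext; simp]
    refine isClosed_iInter fun x => ?_
    have hq : Continuous fun Θ : Matrix n n ℝ => dotProduct (star x) (Θ *ᵥ x) := by
      have : (fun Θ : Matrix n n ℝ => dotProduct (star x) (Θ *ᵥ x))
          = fun Θ => ∑ i, x i * ∑ j, Θ i j * x j := by
        funext Θ; simp [dotProduct, mulVec]
      rw [this]
      exact continuous_finset_sum _ fun i _ => continuous_const.mul
        (continuous_finset_sum _ fun j _ => (continuous_entry i j).mul continuous_const)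
    exact isClosed_le continuous_const hq
  have : {Θ : Matrix n n ℝ | Θ.PosSemidef}
      = {Θ : Matrix n n ℝ | Θᴴ = Θ} ∩ {Θ | ∀ x : n → ℝ, 0 ≤ dotProduct (star x) (Θ *ᵥ x)} := by
    ext Θ; exact posSemidef_iff_dotProduct_mulVec
  rw [this]
  exact h1.inter h2

lemma glasso_exists {Γ : Matrix n n ℝ} (hΓ : Γ.PosSemidef) (hdiag : ∀ i, Γ i i = 1)
    {lam : ℝ} (hlam : 0 < lam) :
    ∃ Θhat : Matrix n n ℝ, Θhat.PosDef ∧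
      ∀ Θ : Matrix n n ℝ, Θ.PosDef → glassoObj Γ lam Θhat ≤ glassoObj Γ lam Θ := by
  classical
  set f := glassoObj Γ lam with hfdef
  set K := f 1 with hKdef
  set c := min lam 1 with hcdef
  have hc : 0 < c := lt_min hlam one_pos
  set T : ℝ := (K - (Fintype.card n) * (1 + Real.log (c/2))) * (2/c) with hTdef
  set R : ℝ := max T 1 with hRdef
  set ε : ℝ := min (Real.exp (-K)) 1 with hεdef
  have hε : 0 < ε := lt_min (Real.exp_pos _) one_pos
  set S : Set (Matrix n n ℝ) :=
    {Θ | Θ.PosSemidef ∧ (∀ i j, |Θ i j| ≤ R) ∧ ε ≤ Θ.det} with hSdef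
  -- sublevel set inclusion
  have hsub : ∀ Θ : Matrix n n ℝ, Θ.PosDef → f Θ ≤ K → Θ ∈ S := by
    intro Θ hΘ hfK
    refine ⟨hΘ.posSemidef, ?_, ?_⟩
    · intro i j
      have hlow := glasso_lower hΓ hdiag hlam hΘ
      have htr : Θ.trace ≤ T := by
        have h1 : c/2 * Θ.trace ≤ K - (Fintype.card n) * (1 + Real.log (c/2)) := by
          rw [hfdef] at hfK; linarith
        have h2 : Θ.trace = (c/2 * Θ.trace) * (2/c) := by field_simp
        rw [h2, hTdef]
        exact mul_le_mul_of_nonneg_right h1 (by positivity)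
      calc |Θ i j| ≤ (Θ i i + Θ j j) / 2 := psd_offdiag_bound hΘ.posSemidef i j
        _ ≤ Θ.trace := by
            have := psd_diag_le_trace hΘ.posSemidef i
            have := psd_diag_le_trace hΘ.posSemidef j
            linarith
        _ ≤ T := htr
        _ ≤ R := le_max_left _ _
    · have h0 := trace_mul_psd_nonneg hΓ hΘ.posSemidef
      have h2 := offDiagL1_nonneg Θ
      have hlog : -K ≤ Real.log Θ.det := by
        rw [hfdef, glassoObj] at hfK
        nlinarith
      calc ε ≤ Real.exp (-K) := min_le_left _ _
        _ ≤ Real.exp (Real.log Θ.det) := Real.exp_le_exp.mpr hlog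
        _ = Θ.det := Real.exp_log hΘ.det_pos
  -- S is compact
  have hSclosed : IsClosed S := by
    have h2 : IsClosed {Θ : Matrix n n ℝ | ∀ i j, |Θ i j| ≤ R} := by
      rw [show {Θ : Matrix n n ℝ | ∀ i j, |Θ i j| ≤ R}
          = ⋂ i, ⋂ j, {Θ : Matrix n n ℝ | |Θ i j| ≤ R} by ext; simp]
      exact isClosed_iInter fun i => isClosed_iInter fun j =>
        isClosed_le (continuous_abs.comp (continuous_entry i j)) continuous_const
    have h3 : IsClosed {Θ : Matrix n n ℝ | ε ≤ Θ.det} :=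
      isClosed_le continuous_const continuous_id.matrix_det
    have : S = {Θ : Matrix n n ℝ | Θ.PosSemidef}
        ∩ ({Θ : Matrix n n ℝ | ∀ i j, |Θ i j| ≤ R} ∩ {Θ : Matrix n n ℝ | ε ≤ Θ.det}) := rfl
    rw [this]
    exact isClosed_posSemidef.inter (h2.inter h3)
  have hScompact : IsCompact S := by
    have hbox : IsCompact (Set.pi Set.univ fun _ : n =>
        Set.pi Set.univ fun _ : n => Set.Icc (-R) R) :=
      isCompact_univ_pi fun _ => isCompact_univ_pi fun _ => isCompact_Icc
    refine hbox.of_isClosed_subset hSclosed ?_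
    intro Θ hΘ
    simp only [Set.mem_pi, Set.mem_univ, forall_true_left, Set.mem_Icc]
    intro i j
    have := hΘ.2.1 i j
    exact abs_le.mp this
  -- 1 ∈ S
  have h1S : (1 : Matrix n n ℝ) ∈ S := by
    refine ⟨Matrix.PosDef.one.posSemidef, ?_, ?_⟩
    · intro i j
      have hR1 : (1:ℝ) ≤ R := le_max_right _ _
      by_cases h : i = j
      · simp only [Matrix.one_apply, h, if_true, abs_one]; linarith
      · simp only [Matrix.one_apply, h, if_false, abs_zero]; linarith
    · rw [det_one]; exact min_le_right _ _
  -- continuity on S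
  have hScont : ContinuousOn f S := by
    refine (continuousOn_glasso Γ lam).mono ?_
    intro Θ hΘ
    exact ne_of_gt (lt_of_lt_of_le hε hΘ.2.2)
  obtain ⟨Θhat, hΘhatS, hminS⟩ := hScompact.exists_isMinOn ⟨1, h1S⟩ hScont
  have hΘhatPD : Θhat.PosDef :=
    psd_posDef_of_det_ne_zero hΘhatS.1 (ne_of_gt (lt_of_lt_of_le hε hΘhatS.2.2))
  refine ⟨Θhat, hΘhatPD, fun Θ hΘ => ?_⟩
  by_cases h : f Θ ≤ K
  · exact hminS (hsub Θ hΘ h)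
  · calc f Θhat ≤ f 1 := hminS h1S
      _ = K := rfl
      _ ≤ f Θ := (not_le.mp h).le

lemma offDiagL1_midpoint (A B : Matrix n n ℝ) :
    offDiagL1 ((2:ℝ)⁻¹ • (A + B)) ≤ 2⁻¹ * (offDiagL1 A + offDiagL1 B) := by
  calc offDiagL1 ((2:ℝ)⁻¹ • (A + B))
      ≤ ∑ i, ∑ j, (if i = j then 0 else 2⁻¹ * (|A i j| + |B i j|)) := by
        refine Finset.sum_le_sum fun i _ => Finset.sum_le_sum fun j _ => ?_
        split
        · exact le_rfl
        · have : ((2:ℝ)⁻¹ • (A + B)) i j = 2⁻¹ * (A i j + B i j) := by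
            simp [Matrix.smul_apply, Matrix.add_apply]
          rw [this, abs_mul, abs_of_nonneg (by norm_num : (0:ℝ) ≤ 2⁻¹)]
          exact mul_le_mul_of_nonneg_left (abs_add_le _ _) (by norm_num)
    _ = 2⁻¹ * (offDiagL1 A + offDiagL1 B) := by
        rw [offDiagL1, offDiagL1, ← Finset.sum_add_distrib, Finset.mul_sum]
        refine Finset.sum_congr rfl fun i _ => ?_
        rw [← Finset.sum_add_distrib, Finset.mul_sum]
        refine Finset.sum_congr rfl fun j _ => ?_
        split <;> ring

lemma glasso_unique {Γ : Matrix n n ℝ} (hΓ : Γ.PosSemidef) (hdiag : ∀ i, Γ i i = 1)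
    {lam : ℝ} (hlam : 0 < lam) {Θ1 Θ2 : Matrix n n ℝ} (h1 : Θ1.PosDef) (h2 : Θ2.PosDef)
    (hm1 : ∀ Θ : Matrix n n ℝ, Θ.PosDef → glassoObj Γ lam Θ1 ≤ glassoObj Γ lam Θ)
    (hm2 : ∀ Θ : Matrix n n ℝ, Θ.PosDef → glassoObj Γ lam Θ2 ≤ glassoObj Γ lam Θ) :
    Θ1 = Θ2 := by
  by_contra hne
  set Mid := (2:ℝ)⁻¹ • (Θ1 + Θ2) with hMiddef
  have hMid : Mid.PosDef := posDef_smul (h1.add h2) (by norm_num)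
  have heq : glassoObj Γ lam Θ2 = glassoObj Γ lam Θ1 :=
    le_antisymm (hm2 Θ1 h1) (hm1 Θ2 h2)
  have htr : (Γ * Mid).trace = 2⁻¹ * ((Γ * Θ1).trace + (Γ * Θ2).trace) := by
    rw [hMiddef, Matrix.mul_smul, Matrix.trace_smul, mul_add, Matrix.trace_add]
    simp
  have hoff := offDiagL1_midpoint Θ1 Θ2
  have hlog := logdet_strict_midpoint h1 h2 hne
  have hlt : glassoObj Γ lam Mid < glassoObj Γ lam Θ1 := by
    have hoff' : lam * offDiagL1 Mid ≤ lam * (2⁻¹ * (offDiagL1 Θ1 + offDiagL1 Θ2)) :=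
      mul_le_mul_of_nonneg_left hoff hlam.le
    simp only [glassoObj] at heq ⊢
    rw [htr]
    have : Real.log Θ1.det + Real.log Θ2.det < 2 * Real.log Mid.det := hlog
    linarith
  exact absurd (hm1 Mid hMid) (not_le.mpr hlt)

lemma glassoObjCov_eq {Γ : Matrix n n ℝ} {lam : ℝ} {A : Matrix n n ℝ} (hA : A.PosDef) :
    glassoObjCov Γ lam A = glassoObj Γ lam A⁻¹ := by
  rw [glassoObjCov, glassoObj, Matrix.det_nonsing_inv, Ring.inverse_eq_inv, Real.log_inv]
  ring

end Aux

/-- Existence and uniqueness of the graphical Lasso (Gemini) estimator when the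
input `Γ̂` is symmetric positive semidefinite with unit diagonal and `λ > 0`;
its inverse is the unique positive definite minimizer of the covariance-form
objective. -/
theorem glasso_existsUnique {m : ℕ} (Γ : Matrix (Fin m) (Fin m) ℝ)
    (hΓ : Γ.PosSemidef) (hdiag : ∀ i, Γ i i = 1) (lam : ℝ) (hlam : 0 < lam) :
    ∃ Θhat : Matrix (Fin m) (Fin m) ℝ, Θhat.PosDef ∧
      (∀ Θ : Matrix (Fin m) (Fin m) ℝ, Θ.PosDef →
        glassoObj Γ lam Θhat ≤ glassoObj Γ lam Θ) ∧
      (∀ Θ' : Matrix (Fin m) (Fin m) ℝ, Θ'.PosDef →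
        (∀ Θ : Matrix (Fin m) (Fin m) ℝ, Θ.PosDef →
          glassoObj Γ lam Θ' ≤ glassoObj Γ lam Θ) → Θ' = Θhat) ∧
      (∀ Arho : Matrix (Fin m) (Fin m) ℝ, Arho.PosDef →
        glassoObjCov Γ lam Θhat⁻¹ ≤ glassoObjCov Γ lam Arho) ∧
      (∀ A' : Matrix (Fin m) (Fin m) ℝ, A'.PosDef →
        (∀ Arho : Matrix (Fin m) (Fin m) ℝ, Arho.PosDef →
          glassoObjCov Γ lam A' ≤ glassoObjCov Γ lam Arho) → A' = Θhat⁻¹) := by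
  obtain ⟨Θhat, hPD, hmin⟩ := glasso_exists hΓ hdiag hlam
  have hinvinv : ∀ A : Matrix (Fin m) (Fin m) ℝ, A.PosDef → A⁻¹⁻¹ = A := fun A hA =>
    Matrix.nonsing_inv_nonsing_inv A (hA.det_pos.ne'.isUnit)
  refine ⟨Θhat, hPD, hmin, ?_, ?_, ?_⟩
  · intro Θ' hΘ' hmin'
    exact glasso_unique hΓ hdiag hlam hΘ' hPD hmin' hmin
  · intro Arho hArho
    rw [glassoObjCov_eq hPD.inv, glassoObjCov_eq hArho, hinvinv Θhat hPD]
    exact hmin _ hArho.inv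
  · intro A' hA' hmin'
    have hA'invmin : ∀ Θ : Matrix (Fin m) (Fin m) ℝ, Θ.PosDef →
        glassoObj Γ lam A'⁻¹ ≤ glassoObj Γ lam Θ := by
      intro Θ hΘ
      have := hmin' Θ⁻¹ hΘ.inv
      rwa [glassoObjCov_eq hA', glassoObjCov_eq hΘ.inv, hinvinv Θ hΘ] at this
    have : A'⁻¹ = Θhat := glasso_unique hΓ hdiag hlam hA'.inv hPD hA'invmin hmin
    rw [← this, hinvinv A' hA']

end
end
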